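/- arXiv:1809.00568 — 2 statements merged into one kernel-verified Lean document; each statement's English description precedes it below -/
import Mathlib

section
/- Let C be a linear code of length n over F_q and 0 ≤ k < e where q = p^e. If C is a k-Galois LCD code, then its k-Galois dual C^{⊥_k} is also a k-Galois LCD code, i.e., C^{⊥_k} ∩ (C^{⊥_k})^{⊥_k} = {0}. -/
open Finset

/-- The `k`-Galois dual of a linear code `C ⊆ F_q^n`, where `q = p^e`:
`C^{⊥_k} = {x | ∀ c ∈ C, ∑ i, c i * (x i)^(p^k) = 0}`. -/
def galoisDual (p k : ℕ) [Fact p.Prime] {F : Type*} [Field F] [CharP F p] {n : ℕ}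
    (C : Submodule F (Fin n → F)) : Submodule F (Fin n → F) where
  carrier := {x | ∀ c ∈ C, ∑ i, c i * x i ^ p ^ k = 0}
  zero_mem' := fun c _ => by
    simp [zero_pow (pow_pos (Nat.Prime.pos (Fact.out : p.Prime)) k).ne']
  add_mem' := by
    intro x y hx hy c hc
    have hpow : ∀ i : Fin n, (x + y) i ^ p ^ k = x i ^ p ^ k + y i ^ p ^ k := fun i => by
      simpa using add_pow_char_pow (x i) (y i) p k
    calc ∑ i, c i * (x + y) i ^ p ^ k
        = ∑ i, (c i * x i ^ p ^ k + c i * y i ^ p ^ k) := by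
          refine Finset.sum_congr rfl fun i _ => by rw [hpow i, mul_add]
      _ = 0 := by
          rw [Finset.sum_add_distrib, hx c hc, hy c hc, add_zero]
  smul_mem' := by
    intro a x hx c hc
    calc ∑ i, c i * (a • x) i ^ p ^ k
        = a ^ p ^ k * ∑ i, c i * x i ^ p ^ k := by
          rw [Finset.mul_sum]
          refine Finset.sum_congr rfl fun i _ => by
            simp only [Pi.smul_apply, smul_eq_mul, mul_pow]; ring
      _ = 0 := by rw [hx c hc, mul_zero]

/-- A linear code `C` is a `k`-Galois LCD code if `C ∩ C^{⊥_k} = {0}`. -/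
def IsGaloisLCD (p k : ℕ) [Fact p.Prime] {F : Type*} [Field F] [CharP F p] {n : ℕ}
    (C : Submodule F (Fin n → F)) : Prop :=
  C ⊓ galoisDual p k C = ⊥

/-- `C` has minimum Hamming distance `d`. -/
def IsMinDist {F : Type*} [Field F] [DecidableEq F] {n : ℕ}
    (C : Submodule F (Fin n → F)) (d : ℕ) : Prop :=
  (∃ x ∈ C, x ≠ 0 ∧ hammingNorm x = d) ∧ ∀ x ∈ C, x ≠ 0 → d ≤ hammingNorm x

/-- `C` is an MDS code: the trivial code `{0}` counts as MDS, otherwise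
the minimum distance is `n - dim C + 1`. -/
def IsMDS {F : Type*} [Field F] [DecidableEq F] {n : ℕ} (C : Submodule F (Fin n → F)) : Prop :=
  C = ⊥ ∨ IsMinDist C (n - Module.finrank F C + 1)

/-- `C` is `λ`-constacyclic: `(λ c_n, c_1, …, c_{n-1}) ∈ C` whenever `(c_1, …, c_n) ∈ C`. -/
def IsConstacyclic {F : Type*} [Field F] {n : ℕ} (lam : F) (C : Submodule F (Fin n → F)) : Prop :=
  ∀ c ∈ C, (fun i : Fin n => if (i : ℕ) = 0 then lam * c ⟨n - 1, by have := i.isLt; omega⟩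
    else c ⟨(i : ℕ) - 1, by have := i.isLt; omega⟩) ∈ C

/-- The Euclidean dual of a linear code. -/
def euclideanDual {F : Type*} [Field F] {n : ℕ}
    (C : Submodule F (Fin n → F)) : Submodule F (Fin n → F) where
  carrier := {x | ∀ c ∈ C, ∑ i, c i * x i = 0}
  zero_mem' := fun c _ => by simp
  add_mem' := by
    intro x y hx hy c hc
    calc ∑ i, c i * (x + y) i = ∑ i, (c i * x i + c i * y i) := by
          refine Finset.sum_congr rfl fun i _ => by simp [mul_add]
      _ = 0 := by rw [Finset.sum_add_distrib, hx c hc, hy c hc, add_zero]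
  smul_mem' := by
    intro a x hx c hc
    calc ∑ i, c i * (a • x) i = a * ∑ i, c i * x i := by
          rw [Finset.mul_sum]
          refine Finset.sum_congr rfl fun i _ => by
            simp only [Pi.smul_apply, smul_eq_mul]; ring
      _ = 0 := by rw [hx c hc, mul_zero]

/-- The coordinatewise `p^m`-power map `x ↦ (x_i^{p^m})_i`, as a semilinear map
with respect to the iterated Frobenius. -/
def frobPowMap (p m : ℕ) [Fact p.Prime] (F : Type*) [Field F] [CharP F p] (n : ℕ) :
    (Fin n → F) →ₛₗ[iterateFrobenius F p m] (Fin n → F) where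
  toFun x := fun i => x i ^ p ^ m
  map_add' x y := funext fun i => by simpa using add_pow_char_pow (x i) (y i) p m
  map_smul' a x := funext fun i => by
    simp [iterateFrobenius_def, mul_pow]

section Aux

open Module

/-- Dot product, as a linear map into the dual. -/
private def dotL (F : Type*) [Field F] (n : ℕ) :
    (Fin n → F) →ₗ[F] Module.Dual F (Fin n → F) where
  toFun x :=
    { toFun := fun y => ∑ i, y i * x i
      map_add' := fun y z => by
        simp [add_mul, Finset.sum_add_distrib]
      map_smul' := fun a y => by
        simp [Finset.mul_sum, mul_assoc] }
  map_add' x y := by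
    ext z
    simp [mul_add, Finset.sum_add_distrib]
  map_smul' a x := LinearMap.ext fun y => by
    show (∑ i, y i * (a • x) i) = a * ∑ i, y i * x i
    rw [Finset.mul_sum]
    exact Finset.sum_congr rfl fun i _ => by simp [mul_comm, mul_left_comm]

private lemma dotL_injective (F : Type*) [Field F] (n : ℕ) :
    Function.Injective (dotL F n) := by
  rw [← LinearMap.ker_eq_bot]
  refine (Submodule.eq_bot_iff _).2 fun x hx => ?_
  funext j
  have := congrArg (fun f : Module.Dual F (Fin n → F) => f (Pi.single j 1)) hx
  simpa [dotL, Pi.single_apply] using this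

private lemma dotL_surjective (F : Type*) [Field F] (n : ℕ) :
    Function.Surjective (dotL F n) := by
  have h : Module.finrank F (Fin n → F) = Module.finrank F (Module.Dual F (Fin n → F)) :=
    (Subspace.dual_finrank_eq).symm
  rw [← LinearMap.range_eq_top, ← LinearMap.ker_eq_bot_iff_range_eq_top_of_finrank_eq_finrank h,
    LinearMap.ker_eq_bot]
  exact dotL_injective F n

private lemma finrank_euclideanDual {F : Type*} [Field F] {n : ℕ}
    (C : Submodule F (Fin n → F)) :
    Module.finrank F (euclideanDual C) + Module.finrank F C = n := by
  classical
  let T : (Fin n → F) →ₗ[F] Module.Dual F C := (C.subtype.dualMap).comp (dotL F n)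
  have hker : LinearMap.ker T = euclideanDual C := by
    ext x
    constructor
    · intro hx c hc
      have := congrArg (fun f : Module.Dual F C => f ⟨c, hc⟩) hx
      simpa [T, dotL] using this
    · intro hx
      ext c
      simpa [T, dotL] using hx c c.2
  have hsurj : Function.Surjective T :=
    (LinearMap.dualMap_surjective_of_injective C.injective_subtype).comp (dotL_surjective F n)
  have hrange : LinearMap.range T = ⊤ := LinearMap.range_eq_top.2 hsurj
  have := LinearMap.finrank_range_add_finrank_ker T
  rw [hrange, hker] at this
  have htop : Module.finrank F (⊤ : Submodule F (Module.Dual F C)) = Module.finrank F C := by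
    rw [finrank_top, Subspace.dual_finrank_eq]
  rw [htop] at this
  rw [Module.finrank_pi] at this
  simpa [add_comm, Fintype.card_fin] using this

private instance instRingHomSurjectiveIterateFrobenius (p m : ℕ) [Fact p.Prime]
    (F : Type*) [Field F] [Finite F] [CharP F p] :
    RingHomSurjective (iterateFrobenius F p m) :=
  ⟨(Finite.injective_iff_bijective.1 (iterateFrobenius F p m).injective).2⟩

private lemma frobPowMap_injective (p m : ℕ) [Fact p.Prime] (F : Type*) [Field F] [CharP F p]
    (n : ℕ) : Function.Injective (frobPowMap p m F n) := by
  intro x y hxy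
  funext i
  have := congrFun hxy i
  exact (iterateFrobenius F p m).injective (by simpa [frobPowMap, iterateFrobenius_def] using this)

private lemma finrank_map_frobPowMap (p m : ℕ) [Fact p.Prime] (F : Type*) [Field F] [Finite F]
    [CharP F p] {n : ℕ} (C : Submodule F (Fin n → F)) :
    Module.finrank F (C.map (frobPowMap p m F n)) = Module.finrank F C := by
  have hbij : Function.Bijective (iterateFrobenius F p m) :=
    Finite.injective_iff_bijective.1 (iterateFrobenius F p m).injective
  have hinj := frobPowMap_injective p m F n
  let j : C ≃+ C.map (frobPowMap p m F n) :=
    { toFun := fun c => ⟨frobPowMap p m F n c, Submodule.mem_map_of_mem c.2⟩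
      invFun := fun d => ⟨(Submodule.mem_map.mp d.2).choose,
        (Submodule.mem_map.mp d.2).choose_spec.1⟩
      left_inv := fun c => by
        apply Subtype.ext
        exact hinj (Submodule.mem_map.mp (Submodule.mem_map_of_mem
          (f := frobPowMap p m F n) c.2)).choose_spec.2
      right_inv := fun d => by
        apply Subtype.ext
        exact (Submodule.mem_map.mp d.2).choose_spec.2
      map_add' := fun c d => by
        apply Subtype.ext
        exact map_add (frobPowMap p m F n) _ _ }
  have hrank : Module.rank F C = Module.rank F (C.map (frobPowMap p m F n)) := by
    refine rank_eq_of_equiv_equiv (ZeroHom.mk (iterateFrobenius F p m) (map_zero _)) j hbij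
      fun r c => ?_
    apply Subtype.ext
    show frobPowMap p m F n (r • (c : Fin n → F)) = _
    rw [map_smulₛₗ]
    rfl
  exact congrArg Cardinal.toNat hrank.symm

end Aux

/-- If `C` is a `k`-Galois LCD code, then its `k`-Galois dual `C^{⊥_k}` is also a
`k`-Galois LCD code, i.e. `C^{⊥_k} ∩ (C^{⊥_k})^{⊥_k} = {0}`. -/
theorem galoisDual_isGaloisLCD
    (p e k : ℕ) [Fact p.Prime] (hk : k < e)
    (F : Type*) [Field F] [Fintype F] [CharP F p]
    (hF : Fintype.card F = p ^ e)
    {n : ℕ} (C : Submodule F (Fin n → F))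
    (hC : IsGaloisLCD p k C) :
    galoisDual p k C ⊓ galoisDual p k (galoisDual p k C) = ⊥ := by
  classical
  set D := galoisDual p k C with hD
  have hek : e - k + k = e := by omega
  have hpe : ∀ a : F, a ^ p ^ e = a := by
    intro a
    rw [← hF]
    exact FiniteField.pow_card a
  -- D is the Euclidean dual of the Frobenius twist of C
  have key : D = euclideanDual (C.map (frobPowMap p (e - k) F n)) := by
    ext x
    constructor
    · intro hx c' hc'
      obtain ⟨c, hc, rfl⟩ := hc'
      have h0 := congrArg (iterateFrobenius F p (e - k)) (hx c hc)
      rw [map_sum, map_zero] at h0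
      calc ∑ i, (frobPowMap p (e - k) F n) c i * x i
          = ∑ i, iterateFrobenius F p (e - k) (c i * x i ^ p ^ k) := by
            refine Finset.sum_congr rfl fun i _ => ?_
            rw [map_mul, map_pow, iterateFrobenius_def, iterateFrobenius_def]
            show c i ^ p ^ (e - k) * x i = _
            rw [← pow_mul, ← pow_add, hek, hpe (x i)]
        _ = 0 := h0
    · intro hx c hc
      have hmem : (frobPowMap p (e - k) F n) c ∈ C.map (frobPowMap p (e - k) F n) :=
        Submodule.mem_map_of_mem hc
      have h0 := congrArg (iterateFrobenius F p k) (hx _ hmem)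
      rw [map_sum, map_zero] at h0
      calc ∑ i, c i * x i ^ p ^ k
          = ∑ i, iterateFrobenius F p k ((frobPowMap p (e - k) F n) c i * x i) := by
            refine Finset.sum_congr rfl fun i _ => ?_
            rw [map_mul, iterateFrobenius_def, iterateFrobenius_def]
            show _ = (c i ^ p ^ (e - k)) ^ p ^ k * x i ^ p ^ k
            rw [← pow_mul, ← pow_add, hek, hpe (c i)]
        _ = 0 := h0
  -- dimension count
  have hdim : Module.finrank F D + Module.finrank F C = n := by
    have h1 := finrank_euclideanDual (C.map (frobPowMap p (e - k) F n))
    rw [finrank_map_frobPowMap] at h1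
    rw [key]
    exact h1
  -- C ⊔ D = ⊤
  have hsup : C ⊔ D = ⊤ := by
    apply Submodule.eq_top_of_finrank_eq
    have h1 := Submodule.finrank_sup_add_finrank_inf_eq C D
    have h2 : C ⊓ D = ⊥ := hC
    rw [h2, finrank_bot, add_zero] at h1
    rw [h1, Module.finrank_pi, Fintype.card_fin]
    omega
  -- conclude
  refine (Submodule.eq_bot_iff _).2 fun x hx => ?_
  obtain ⟨hxD, hxDD⟩ := Submodule.mem_inf.1 hx
  funext j
  have hv : (Pi.single j (1 : F) : Fin n → F) ∈ C ⊔ D := by rw [hsup]; trivial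
  obtain ⟨c, hc, d, hd, hcd⟩ := Submodule.mem_sup.1 hv
  have h1 : ∑ i, c i * x i ^ p ^ k = 0 := hxD c hc
  have h2 : ∑ i, d i * x i ^ p ^ k = 0 := hxDD d hd
  have h3 : ∑ i, (Pi.single j (1 : F) : Fin n → F) i * x i ^ p ^ k = 0 := by
    rw [← hcd]
    calc ∑ i, (c + d) i * x i ^ p ^ k
        = ∑ i, (c i * x i ^ p ^ k + d i * x i ^ p ^ k) := by
          refine Finset.sum_congr rfl fun i _ => ?_
          show (c i + d i) * _ = _
          ring
      _ = 0 := by rw [Finset.sum_add_distrib, h1, h2, add_zero]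
  have hxj : x j ^ p ^ k = 0 := by
    simpa [Pi.single_apply] using h3
  have hpk : p ^ k ≠ 0 := (pow_pos (Fact.out : p.Prime).pos k).ne'
  exact pow_eq_zero_iff hpk |>.1 hxj
end

section
/- Let C be a linear code of length n over F_q and 0 ≤ k < e where q = p^e. Define C^{p^{e-k}} = {(a_1^{p^{e-k}}, ..., a_n^{p^{e-k}}) : (a_1,...,a_n) ∈ C}. Then the Euclidean dual of C^{p^{e-k}} equals the k-Galois dual of C, i.e., (C^{p^{e-k}})^⊥ = C^{⊥_k}; moreover C^{p^{e-k}} is a linear code with the same dimension and the same minimum Hamming distance as C. -/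
open Finset

/-- On a finite field, the iterated Frobenius is surjective. -/
instance (p m : ℕ) [Fact p.Prime] (F : Type*) [Field F] [Finite F] [CharP F p] :
    RingHomSurjective (iterateFrobenius F p m) :=
  ⟨Finite.injective_iff_surjective.mp (iterateFrobenius F p m).injective⟩


section auxlemmas
variable (p : ℕ) [Fact p.Prime] {F : Type*} [Field F] [CharP F p]

omit [CharP F p] in
lemma aux_pow_zero_iff (m : ℕ) (x : F) : x ^ p ^ m = 0 ↔ x = 0 :=
  pow_eq_zero_iff (pow_ne_zero m (Nat.Prime.pos Fact.out).ne')

lemma aux_frob_inj (m : ℕ) : Function.Injective (fun x : F => x ^ p ^ m) :=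
  fun a b h => (iterateFrobenius F p m).injective (by simpa [iterateFrobenius_def] using h)

end auxlemmas

lemma mem_euclideanDual {F : Type*} [Field F] {n : ℕ} (C : Submodule F (Fin n → F))
    (x : Fin n → F) : x ∈ euclideanDual C ↔ ∀ c ∈ C, ∑ i, c i * x i = 0 := Iff.rfl

lemma mem_galoisDual (p k : ℕ) [Fact p.Prime] {F : Type*} [Field F] [CharP F p] {n : ℕ}
    (C : Submodule F (Fin n → F)) (x : Fin n → F) :
    x ∈ galoisDual p k C ↔ ∀ c ∈ C, ∑ i, c i * x i ^ p ^ k = 0 := Iff.rfl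

lemma hammingNorm_frobPow (p m : ℕ) [Fact p.Prime] {F : Type*} [Field F] [DecidableEq F]
    [CharP F p] {n : ℕ} (x : Fin n → F) :
    hammingNorm (frobPowMap p m F n x) = hammingNorm x := by
  unfold hammingNorm
  congr 1
  ext i
  simp only [Finset.mem_filter, Finset.mem_univ, true_and]
  exact not_congr (aux_pow_zero_iff p m (x i))

/-- For a linear code `C` of length `n` over `F_q` (`q = p^e`, `0 ≤ k < e`), the code
`C^{p^{e-k}}` (the image of `C` under the coordinatewise `p^{e-k}`-th power map) satisfies
`(C^{p^{e-k}})^⊥ = C^{⊥_k}`; moreover `C^{p^{e-k}}` is a linear code with the same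
dimension and the same minimum Hamming distance as `C`. -/
theorem euclideanDual_frobPow_eq_galoisDual
    (p e k : ℕ) [Fact p.Prime] (hk : k < e)
    (F : Type*) [Field F] [Fintype F] [DecidableEq F] [CharP F p]
    (hF : Fintype.card F = p ^ e)
    {n : ℕ} (C : Submodule F (Fin n → F)) :
    euclideanDual (C.map (frobPowMap p (e - k) F n)) = galoisDual p k C ∧
    Module.finrank F (C.map (frobPowMap p (e - k) F n)) = Module.finrank F C ∧
    (∀ d : ℕ, IsMinDist (C.map (frobPowMap p (e - k) F n)) d ↔ IsMinDist C d) := by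

  set m := e - k with hm
  set φ := frobPowMap p m F n with hφ
  have hpe : ∀ x : F, x ^ p ^ e = x := fun x => by rw [← hF]; exact FiniteField.pow_card x
  have hcomp : ∀ x : F, (x ^ p ^ m) ^ p ^ k = x := fun x => by
    rw [← pow_mul, ← pow_add, hm, Nat.sub_add_cancel hk.le, hpe]
  have hφ_apply : ∀ (x : Fin n → F) (i : Fin n), φ x i = x i ^ p ^ m := fun _ _ => rfl
  have hinj : Function.Injective φ := fun a b h => funext fun i =>
    aux_frob_inj p m (by simpa [hφ_apply] using congrFun h i)
  refine ⟨?_, ?_, ?_⟩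
  · ext x
    rw [mem_euclideanDual, mem_galoisDual]
    constructor
    · intro h c hc
      apply aux_frob_inj p m (F := F)
      show (∑ i, c i * x i ^ p ^ k) ^ p ^ m = 0 ^ p ^ m
      rw [zero_pow (pow_ne_zero m (Nat.Prime.pos Fact.out).ne'), sum_pow_char_pow]
      calc ∑ i, (c i * x i ^ p ^ k) ^ p ^ m
          = ∑ i, φ c i * x i := by
            refine Finset.sum_congr rfl fun i _ => ?_
            rw [mul_pow, hφ_apply]
            rw [show (x i ^ p ^ k) ^ p ^ m = x i from ?_]
            rw [← pow_mul, ← pow_add, Nat.add_sub_cancel' hk.le, hpe]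
        _ = 0 := h (φ c) (Submodule.mem_map_of_mem hc)
    · rintro h d ⟨c, hc, rfl⟩
      calc ∑ i, φ c i * x i
          = ∑ i, (c i * x i ^ p ^ k) ^ p ^ m := by
            refine Finset.sum_congr rfl fun i _ => ?_
            rw [mul_pow, hφ_apply]
            congr 1
            rw [← pow_mul, ← pow_add, Nat.add_sub_cancel' hk.le, hpe]
        _ = (∑ i, c i * x i ^ p ^ k) ^ p ^ m := by rw [sum_pow_char_pow]
        _ = 0 := by rw [h c hc, (aux_pow_zero_iff p m (0 : F)).mpr rfl]
  · have hcard : Nat.card (C.map φ) = Nat.card C :=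
      Nat.card_congr (Equiv.Set.image (⇑φ) (C : Set (Fin n → F)) hinj).symm
    classical
    haveI : Fintype (Submodule.map φ C) := Fintype.ofFinite _
    haveI : Fintype C := Fintype.ofFinite _
    have h1 := Module.card_eq_pow_finrank (K := F) (V := C.map φ)
    have h2 := Module.card_eq_pow_finrank (K := F) (V := C)
    have hc2 : 2 ≤ Fintype.card F := Fintype.one_lt_card
    have key : Fintype.card F ^ Module.finrank F (C.map φ)
        = Fintype.card F ^ Module.finrank F C := by
      rw [← h1, ← h2, ← Nat.card_eq_fintype_card, ← Nat.card_eq_fintype_card, hcard]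
    exact Nat.pow_right_injective hc2 key
  · intro d
    have hz : ∀ x : Fin n → F, φ x = 0 ↔ x = 0 := fun x =>
      ⟨fun h => hinj (by rw [h, map_zero]), fun h => by rw [h, map_zero]⟩
    constructor
    · rintro ⟨⟨y, ⟨c, hc, rfl⟩, hy0, hyd⟩, hmin⟩
      refine ⟨⟨c, hc, fun h => hy0 (by rw [h, map_zero]), by
        rwa [hammingNorm_frobPow] at hyd⟩, fun x hx hx0 => ?_⟩
      have := hmin (φ x) (Submodule.mem_map_of_mem hx) (fun h => hx0 ((hz x).mp h))
      rwa [hammingNorm_frobPow] at this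
    · rintro ⟨⟨c, hc, hc0, hcd⟩, hmin⟩
      refine ⟨⟨φ c, Submodule.mem_map_of_mem hc, fun h => hc0 ((hz c).mp h), by
        rwa [hammingNorm_frobPow]⟩, ?_⟩
      rintro y ⟨x, hx, rfl⟩ hy0
      rw [hammingNorm_frobPow]
      exact hmin x hx (fun h => hy0 (by rw [h, map_zero]))
end
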